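/- arXiv:1506.07267 — 2 statements merged into one kernel-verified Lean document; each statement's English description precedes it below -/
import Mathlib

section
/- Let s ≥ 2, n ≥ 1, x ∈ (ℂ*)^s, and μ, ν ∈ Z_{s,n}. If there exists j ∈ {1,…,s−1} with ν_j < μ_j, then F_μ(x; η_ν(x)) = 0. In particular, F_μ(x; η_ν(x)) = 0 whenever ν ≺ μ in the lexicographic order. -/
open Finset

/-- the infinite q-shifted factorial `(u)_∞`. -/
noncomputable def pinf (q u : ℂ) : ℂ := ∏' l : ℕ, (1 - u * q ^ l)

/-- the theta function `θ(u) = (u)_∞ (q/u)_∞`. -/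
noncomputable def theta (q u : ℂ) : ℂ := pinf q u * pinf q (q / u)

/-- `e(a;b) = a⁻¹ θ(ab) θ(a/b)`. -/
noncomputable def ee (q a b : ℂ) : ℂ := a⁻¹ * theta q (a * b) * theta q (a / b)

/-- the t-shifted factorial `e(a;b)_r`. -/
noncomputable def eer (q t a b : ℂ) (r : ℕ) : ℂ := ∏ k ∈ Finset.range r, ee q (a * t ^ k) b

/-- `Z_{s,n} = {μ ∈ ℕ^s : μ_1 + ⋯ + μ_s = n}`. -/
abbrev ZIdx (s n : ℕ) := {μ : Fin s → Fin (n+1) // ∑ i, (μ i : ℕ) = n}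

/-- the underlying `ℕ`-valued multi-index. -/
def zv {s n : ℕ} (μ : ZIdx s n) : Fin s → ℕ := fun i => (μ.1 i : ℕ)

/-- the point `x_μ ∈ (ℂ*)^n`: blocks `x_i, x_i t, …, x_i t^{μ_i - 1}`. -/
noncomputable def xpt (t : ℂ) {s : ℕ} (x : Fin s → ℂ) (μ : Fin s → ℕ) (n : ℕ) : Fin n → ℂ :=
  fun k =>
    (List.flatten (List.ofFn fun i : Fin s =>
      List.ofFn fun j : Fin (μ i) => x i * t ^ (j : ℕ))).getD k 1

/-- the point `η_ν(x) = (x_1 t^{ν_1}, …, x_{s-1} t^{ν_{s-1}}) ∈ (ℂ*)^{s-1}`. -/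
noncomputable def eta (t : ℂ) {s : ℕ} (x : Fin s → ℂ) (ν : Fin s → ℕ) : Fin (s-1) → ℂ :=
  fun j => x (Fin.castLE (Nat.sub_le s 1) j) * t ^ (ν (Fin.castLE (Nat.sub_le s 1) j))

/-- `F_μ(x;y) = ∏_{i=1}^{s} ∏_{j=1}^{s-1} e(x_i; y_j)_{μ_i}`. -/
noncomputable def Ffun (q t : ℂ) {s : ℕ} (x : Fin s → ℂ) (μ : Fin s → ℕ)
    (y : Fin (s-1) → ℂ) : ℂ :=
  ∏ i : Fin s, ∏ j : Fin (s-1), eer q t (x i) (y j) (μ i)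

/-- `λ_j^{(k)} = |K_j ∩ {1,…,k}|` where `K_j = c⁻¹(j)` (0-based: indices `< k`). -/
def cnt {s n : ℕ} (c : Fin n → Fin s) (j : Fin s) (k : Fin n) : ℕ :=
  ((Finset.univ : Finset (Fin n)).filter fun l => l < k ∧ c l = j).card

/-- the elliptic Lagrange interpolation function `E_λ(x;z)` (explicit formula). -/
noncomputable def Efun (q t : ℂ) {s n : ℕ} (x : Fin s → ℂ) (lam : Fin s → ℕ)
    (z : Fin n → ℂ) : ℂ :=
  ∑ c ∈ (Finset.univ : Finset (Fin n → Fin s)).filter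
      (fun c => ∀ i, ((Finset.univ : Finset (Fin n)).filter fun k => c k = i).card = lam i),
    ∏ k : Fin n, ∏ j ∈ (Finset.univ : Finset (Fin s)).filter (fun j => j ≠ c k),
      ee q (z k) (x j * t ^ cnt c j k) / ee q (x (c k) * t ^ cnt c (c k) k) (x j * t ^ cnt c j k)

/-- `(ℂ*)^n` inside `ℂ^n`. -/
def torus (n : ℕ) : Set (Fin n → ℂ) := {z | ∀ i, z i ≠ 0}

/-- membership in the space `H_{m,n}` of W_n-invariant holomorphic functions on `(ℂ*)^n`
with the quasi-periodicity `f(…, q z_i, …) = (q z_i^2)^{-m} f(z)`. -/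
def MemH (q : ℂ) (m n : ℕ) (f : (Fin n → ℂ) → ℂ) : Prop :=
  AnalyticOnNhd ℂ f (torus n) ∧
  (∀ z ∈ torus n, ∀ σ : Equiv.Perm (Fin n), f (z ∘ σ) = f z) ∧
  (∀ z ∈ torus n, ∀ i, f (Function.update z i (z i)⁻¹) = f z) ∧
  (∀ z ∈ torus n, ∀ i, f (Function.update z i (q * z i)) = ((q * z i ^ 2) ^ m)⁻¹ * f z)

/-- genericity of `x`: `e(x_i t^a; x_j t^b) ≠ 0` for `i < j` and `0 ≤ a, b ≤ n`. -/
def Generic (q t : ℂ) {s : ℕ} (n : ℕ) (x : Fin s → ℂ) : Prop :=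
  ∀ i j : Fin s, i < j → ∀ a b : ℕ, a ≤ n → b ≤ n → ee q (x i * t ^ a) (x j * t ^ b) ≠ 0

/-- lexicographic order `μ ≺ ν` on multi-indices. -/
def lexLt {s : ℕ} (μ ν : Fin s → ℕ) : Prop :=
  ∃ k : Fin s, (∀ j : Fin s, j < k → μ j = ν j) ∧ μ k < ν k


lemma hasProd_zero_of_eq_zero {f : ℕ → ℂ} (i : ℕ) (h : f i = 0) : HasProd f 0 := by
  have hev : ∀ᶠ s in Filter.atTop, (∏ j ∈ s, f j) = 0 := by
    filter_upwards [Filter.eventually_ge_atTop ({i} : Finset ℕ)] with s hs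
    exact Finset.prod_eq_zero (hs (Finset.mem_singleton_self i)) h
  exact (tendsto_const_nhds : Filter.Tendsto (fun _ : Finset ℕ => (0:ℂ)) _ _).congr'
    (hev.mono fun s hs => hs.symm)

lemma pinf_one_eq_zero (q : ℂ) : pinf q 1 = 0 := by
  have : HasProd (fun l : ℕ => (1 - 1 * q ^ l)) 0 :=
    hasProd_zero_of_eq_zero 0 (by simp)
  simpa [pinf] using this.tprod_eq

lemma theta_one_eq_zero (q : ℂ) : theta q 1 = 0 := by
  simp [theta, pinf_one_eq_zero]

lemma ee_self_eq_zero (q a : ℂ) (ha : a ≠ 0) : ee q a a = 0 := by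
  simp [ee, div_self ha, theta_one_eq_zero]

/-- Triangularity: `F_μ(x; η_ν(x)) = 0` if `ν_j < μ_j` for some `j ≤ s-1`;
in particular `F_μ(x; η_ν(x)) = 0` whenever `ν ≺ μ` lexicographically. -/
theorem Ffun_triangular (q : ℂ) (hq0 : 0 < ‖q‖) (hq1 : ‖q‖ < 1)
    (t : ℂ) (ht : t ≠ 0) (s n : ℕ) (hs : 2 ≤ s) (hn : 1 ≤ n)
    (x : Fin s → ℂ) (hx : ∀ i, x i ≠ 0) (μ ν : ZIdx s n) :
    ((∃ j : Fin s, (j : ℕ) < s - 1 ∧ zv ν j < zv μ j) →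
        Ffun q t x (zv μ) (eta t x (zv ν)) = 0) ∧
    (lexLt (zv ν) (zv μ) → Ffun q t x (zv μ) (eta t x (zv ν)) = 0) := by
  have main : (∃ j : Fin s, (j : ℕ) < s - 1 ∧ zv ν j < zv μ j) →
      Ffun q t x (zv μ) (eta t x (zv ν)) = 0 := by
    rintro ⟨j, hj, hlt⟩
    unfold Ffun
    apply Finset.prod_eq_zero (Finset.mem_univ j)
    apply Finset.prod_eq_zero (Finset.mem_univ (⟨(j : ℕ), hj⟩ : Fin (s-1)))
    have hcast : (Fin.castLE (Nat.sub_le s 1) (⟨(j : ℕ), hj⟩ : Fin (s-1))) = j := by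
      ext; rfl
    unfold eer
    apply Finset.prod_eq_zero (Finset.mem_range.mpr hlt)
    rw [eta, hcast]
    exact ee_self_eq_zero q _ (mul_ne_zero (hx j) (pow_ne_zero _ ht))
  refine ⟨main, ?_⟩
  rintro ⟨k, hpre, hlt⟩
  apply main
  refine ⟨k, ?_, hlt⟩
  by_contra hk
  have hk' : (k : ℕ) = s - 1 := le_antisymm (Nat.lt_succ_iff.mp (by
    have := k.isLt; omega)) (le_of_not_gt hk)
  -- all indices other than k are < k
  have hall : ∀ j : Fin s, j ≠ k → j < k := by
    intro j hjk
    have : (j : ℕ) ≠ (k : ℕ) := fun h => hjk (Fin.ext h)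
    have hjlt : (j : ℕ) < s := j.isLt
    exact Fin.lt_def.mpr (by omega)
  have hsum₁ : ∑ i, zv ν i = n := ν.2
  have hsum₂ : ∑ i, zv μ i = n := μ.2
  rw [← Finset.add_sum_erase _ _ (Finset.mem_univ k)] at hsum₁ hsum₂
  have heq : ∑ i ∈ Finset.univ.erase k, zv ν i = ∑ i ∈ Finset.univ.erase k, zv μ i := by
    apply Finset.sum_congr rfl
    intro j hjmem
    exact hpre j (hall j (Finset.ne_of_mem_erase hjmem))
  omega
end

section
/- Let s ≥ 2 and n = m + l with m, l ≥ 1, and let x ∈ (ℂ*)^s be generic (for the size-n condition, so in particular all denominators occurring below are nonzero). Write z = (z', z'') ∈ (ℂ*)^n with z' = (z_1,…,z_m) ∈ (ℂ*)^m and z'' = (z_{m+1},…,z_n) ∈ (ℂ*)^l. Then for every λ ∈ Z_{s,n}: E_λ(x; z) = Σ_{μ∈Z_{s,m}, ν∈Z_{s,l}, μ+ν=λ} E_μ(x; z') · E_ν(x t^μ; z''), where x t^μ = (x_1 t^{μ_1}, x_2 t^{μ_2}, …, x_s t^{μ_s}). -/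
open Finset

section Aux

variable {s N m l : ℕ}

/-- number of `k` with `c k = i`. -/
def cntF {s N : ℕ} (c : Fin N → Fin s) (i : Fin s) : ℕ :=
  ((Finset.univ : Finset (Fin N)).filter fun k => c k = i).card

lemma cnt_eq_sum (c : Fin N → Fin s) (j : Fin s) (k : Fin N) :
    cnt c j k = ∑ i : Fin N, if i < k ∧ c i = j then 1 else 0 := by
  rw [cnt, Finset.card_filter]

lemma cnt_castAdd (c : Fin (m + l) → Fin s) (j : Fin s) (k : Fin m) :
    cnt c j (Fin.castAdd l k) = cnt (c ∘ Fin.castAdd l) j k := by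
  rw [cnt_eq_sum, cnt_eq_sum, Fin.sum_univ_add]
  have h2 : ∀ i : Fin l,
      (if Fin.natAdd m i < Fin.castAdd l k ∧ c (Fin.natAdd m i) = j then 1 else 0) = 0 := by
    intro i
    rw [if_neg]
    rintro ⟨h, -⟩
    simp only [Fin.lt_def, Fin.coe_natAdd, Fin.coe_castAdd] at h
    omega
  simp only [h2, Finset.sum_const_zero, add_zero]
  apply Finset.sum_congr rfl
  intro i _
  congr 1

lemma cnt_natAdd (c : Fin (m + l) → Fin s) (j : Fin s) (k : Fin l) :
    cnt c j (Fin.natAdd m k) = cntF (c ∘ Fin.castAdd l) j + cnt (c ∘ Fin.natAdd m) j k := by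
  rw [cnt_eq_sum, cnt_eq_sum, Fin.sum_univ_add, cntF, Finset.card_filter]
  congr 1
  · apply Finset.sum_congr rfl
    intro i _
    congr 1
    simp only [eq_iff_iff, Fin.lt_def, Fin.coe_castAdd, Fin.coe_natAdd, Function.comp_apply]
    have : (i : ℕ) < m + (k : ℕ) := lt_of_lt_of_le i.isLt (Nat.le_add_right _ _)
    tauto
  · apply Finset.sum_congr rfl
    intro i _
    congr 1
    simp only [eq_iff_iff, Fin.lt_def, Fin.coe_natAdd, Function.comp_apply]
    omega

lemma cntF_add (c : Fin (m + l) → Fin s) (i : Fin s) :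
    cntF c i = cntF (c ∘ Fin.castAdd l) i + cntF (c ∘ Fin.natAdd m) i := by
  simp only [cntF, Finset.card_filter]
  rw [Fin.sum_univ_add]
  rfl

lemma cntF_le (c : Fin N → Fin s) (i : Fin s) : cntF c i ≤ N := by
  refine le_trans (Finset.card_filter_le _ _) ?_
  simp

lemma sum_cntF (c : Fin N → Fin s) : ∑ i, cntF c i = N := by
  have := Finset.card_eq_sum_card_fiberwise
    (s := (Finset.univ : Finset (Fin N))) (t := (Finset.univ : Finset (Fin s)))
    (f := c) (fun x _ => Finset.mem_univ _)
  simpa [cntF] using this.symm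

/-- multi-index of fiber cardinalities. -/
def toZI {s N : ℕ} (c : Fin N → Fin s) : ZIdx s N :=
  ⟨fun i => ⟨cntF c i, Nat.lt_succ_of_le (cntF_le c i)⟩, by
    simpa using sum_cntF c⟩

lemma zv_toZI (c : Fin N → Fin s) : zv (toZI c) = cntF c := rfl

lemma toZI_eq_iff {c : Fin N → Fin s} {μ : ZIdx s N} :
    toZI c = μ ↔ ∀ i, cntF c i = zv μ i := by
  constructor
  · intro h i
    rw [← h]; rfl
  · intro h
    apply Subtype.ext
    funext i
    exact Fin.ext (h i)

/-- one summand of `Efun`. -/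
noncomputable def term (q t : ℂ) {s N : ℕ} (x : Fin s → ℂ) (z : Fin N → ℂ)
    (c : Fin N → Fin s) : ℂ :=
  ∏ k : Fin N, ∏ j ∈ (Finset.univ : Finset (Fin s)).filter (fun j => j ≠ c k),
    ee q (z k) (x j * t ^ cnt c j k) / ee q (x (c k) * t ^ cnt c (c k) k) (x j * t ^ cnt c j k)

lemma Efun_eq_sum_term (q t : ℂ) (x : Fin s → ℂ) (lam : Fin s → ℕ) (z : Fin N → ℂ) :
    Efun q t x lam z =
      ∑ c ∈ (Finset.univ : Finset (Fin N → Fin s)).filter (fun c => ∀ i, cntF c i = lam i),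
        term q t x z c := rfl

lemma term_split (q t : ℂ) (x : Fin s → ℂ) (z : Fin (m + l) → ℂ) (c : Fin (m + l) → Fin s) :
    term q t x z c =
      term q t x (z ∘ Fin.castAdd l) (c ∘ Fin.castAdd l) *
        term q t (fun i => x i * t ^ cntF (c ∘ Fin.castAdd l) i) (z ∘ Fin.natAdd m)
          (c ∘ Fin.natAdd m) := by
  rw [term, Fin.prod_univ_add]
  congr 1
  · apply Finset.prod_congr rfl
    intro k _
    apply Finset.prod_congr rfl
    intro j _
    rw [cnt_castAdd, cnt_castAdd]
    rfl
  · apply Finset.prod_congr rfl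
    intro k _
    have hxx : ∀ j : Fin s, x j * t ^ cnt c j (Fin.natAdd m k) =
        (x j * t ^ cntF (c ∘ Fin.castAdd l) j) * t ^ cnt (c ∘ Fin.natAdd m) j k := by
      intro j
      rw [cnt_natAdd, pow_add, ← mul_assoc]
    apply Finset.prod_congr rfl
    intro j _
    rw [hxx, hxx]
    rfl

lemma append_comp_castAdd (c' : Fin m → Fin s) (c'' : Fin l → Fin s) :
    Fin.append c' c'' ∘ Fin.castAdd l = c' := by
  funext i; simp [Fin.append_left]

lemma append_comp_natAdd (c' : Fin m → Fin s) (c'' : Fin l → Fin s) :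
    Fin.append c' c'' ∘ Fin.natAdd m = c'' := by
  funext i; simp [Fin.append_right]

lemma append_split (c : Fin (m + l) → Fin s) :
    Fin.append (c ∘ Fin.castAdd l) (c ∘ Fin.natAdd m) = c := by
  funext i
  cases i using Fin.addCases with
  | left i => simp [Fin.append_left]
  | right i => simp [Fin.append_right]

end Aux

/-- Recursion formula:
`E_λ(x;z) = Σ_{μ+ν=λ} E_μ(x;z') E_ν(x t^μ; z'')` for `z = (z',z'')`, `n = m + l`. -/
theorem Efun_recursion (q : ℂ) (hq0 : 0 < ‖q‖) (hq1 : ‖q‖ < 1)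
    (t : ℂ) (ht : t ≠ 0) (s m l : ℕ) (hs : 2 ≤ s) (hm : 1 ≤ m) (hl : 1 ≤ l)
    (x : Fin s → ℂ) (hx : ∀ i, x i ≠ 0) (hgen : Generic q t (m + l) x)
    (lam : ZIdx s (m + l)) (z : Fin (m + l) → ℂ) (hz : ∀ k, z k ≠ 0) :
    Efun q t x (zv lam) z =
      ∑ p ∈ (Finset.univ : Finset (ZIdx s m × ZIdx s l)).filter
          (fun p => ∀ i, zv p.1 i + zv p.2 i = zv lam i),
        Efun q t x (zv p.1) (z ∘ Fin.castAdd l) *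
          Efun q t (fun i => x i * t ^ zv p.1 i) (zv p.2) (z ∘ Fin.natAdd m) := by
  classical
  have step1 : Efun q t x (zv lam) z =
      ∑ cc ∈ (Finset.univ : Finset ((Fin m → Fin s) × (Fin l → Fin s))).filter
          (fun cc => ∀ i, cntF cc.1 i + cntF cc.2 i = zv lam i),
        term q t x (z ∘ Fin.castAdd l) cc.1 *
          term q t (fun i => x i * t ^ cntF cc.1 i) (z ∘ Fin.natAdd m) cc.2 := by
    rw [Efun_eq_sum_term]
    refine Finset.sum_nbij' (i := fun c => (c ∘ Fin.castAdd l, c ∘ Fin.natAdd m))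
      (j := fun cc => Fin.append cc.1 cc.2) ?_ ?_ ?_ ?_ ?_
    · intro c hc
      rw [Finset.mem_filter] at hc ⊢
      exact ⟨Finset.mem_univ _, fun i => by rw [← cntF_add]; exact hc.2 i⟩
    · intro cc hcc
      rw [Finset.mem_filter] at hcc ⊢
      refine ⟨Finset.mem_univ _, fun i => ?_⟩
      rw [cntF_add, append_comp_castAdd, append_comp_natAdd]
      exact hcc.2 i
    · intro c _
      exact append_split c
    · intro cc _
      exact Prod.ext (append_comp_castAdd _ _) (append_comp_natAdd _ _)
    · intro c _
      exact term_split q t x z c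
  rw [step1]
  symm
  have hmaps : ∀ cc ∈ (Finset.univ : Finset ((Fin m → Fin s) × (Fin l → Fin s))).filter
      (fun cc => ∀ i, cntF cc.1 i + cntF cc.2 i = zv lam i),
      ((toZI cc.1, toZI cc.2) : ZIdx s m × ZIdx s l) ∈
        (Finset.univ : Finset (ZIdx s m × ZIdx s l)).filter
          (fun p => ∀ i, zv p.1 i + zv p.2 i = zv lam i) := by
    intro cc hcc
    rw [Finset.mem_filter] at hcc ⊢
    exact ⟨Finset.mem_univ _, fun i => hcc.2 i⟩
  rw [← Finset.sum_fiberwise_of_maps_to hmaps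
    (fun cc => term q t x (z ∘ Fin.castAdd l) cc.1 *
      term q t (fun i => x i * t ^ cntF cc.1 i) (z ∘ Fin.natAdd m) cc.2)]
  apply Finset.sum_congr rfl
  intro p hp
  rw [Finset.mem_filter] at hp
  have hpc := hp.2
  rw [Efun_eq_sum_term, Efun_eq_sum_term, Finset.sum_mul_sum, ← Finset.sum_product']
  have hset : ((Finset.univ : Finset (Fin m → Fin s)).filter
        (fun c => ∀ i, cntF c i = zv p.1 i)) ×ˢ
      ((Finset.univ : Finset (Fin l → Fin s)).filter
        (fun c => ∀ i, cntF c i = zv p.2 i)) =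
      ((Finset.univ : Finset ((Fin m → Fin s) × (Fin l → Fin s))).filter
          (fun cc => ∀ i, cntF cc.1 i + cntF cc.2 i = zv lam i)).filter
        (fun cc => ((toZI cc.1, toZI cc.2) : ZIdx s m × ZIdx s l) = p) := by
    ext cc
    simp only [Finset.mem_product, Finset.mem_filter, Finset.mem_univ, true_and,
      Prod.ext_iff]
    constructor
    · rintro ⟨h1, h2⟩
      exact ⟨fun i => by rw [h1 i, h2 i]; exact hpc i,
        toZI_eq_iff.2 h1, toZI_eq_iff.2 h2⟩
    · rintro ⟨-, h1, h2⟩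
      exact ⟨toZI_eq_iff.1 h1, toZI_eq_iff.1 h2⟩
  rw [hset]
  apply Finset.sum_congr rfl
  intro cc hcc
  rw [Finset.mem_filter] at hcc
  have h1 : toZI cc.1 = p.1 := congrArg Prod.fst hcc.2
  have hf : (fun i => x i * t ^ zv p.1 i) = (fun i => x i * t ^ cntF cc.1 i) := by
    funext i
    rw [(toZI_eq_iff.1 h1 i)]
  rw [hf]
end
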